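/- (Noise bound, Lemma 2.) Let 𝐔₁, …, 𝐔_T be subspaces of ℝⁿ, all of dimension d, such that d₂(𝐔_j, 𝐔_{j+1}) ≤ c for j = 1, …, T−1 and some c ≥ 0. Let w_j = w̄_j + e_j for j = 1, …, T, where w̄_j ∈ 𝐔_j and ‖e_j‖₂ ≤ ε for some ε ≥ 0. Let W ∈ ℝ^{n×T} be the matrix with columns w₁, …, w_T and let D = diag(T−1, T−2, …, 1, 0) ∈ ℝ^{T×T}. Then ‖P_{𝐔_T}^⊥ W‖_F ≤ c · ‖W D‖_F + ε √T (c(T−1) + 1). -/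

import Mathlib

open Matrix

/-- Euclidean norm of a vector in `ℝⁿ`. -/
noncomputable def vecEnorm {n : ℕ} (v : Fin n → ℝ) : ℝ :=
  Real.sqrt (∑ i, (v i) ^ 2)

/-- Frobenius norm of a matrix. -/
noncomputable def frob {n m : ℕ} (A : Matrix (Fin n) (Fin m) ℝ) : ℝ :=
  Real.sqrt (Matrix.trace (Aᵀ * A))

lemma trace_transpose_mul_self {n m : ℕ} (A : Matrix (Fin n) (Fin m) ℝ) :
    Matrix.trace (Aᵀ * A) = ∑ i, ∑ j, A i j ^ 2 := by
  rw [Finset.sum_comm]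
  simp [Matrix.trace, Matrix.mul_apply, Matrix.diag, sq]

lemma vecEnorm_nonneg' {n : ℕ} (v : Fin n → ℝ) : 0 ≤ vecEnorm v := Real.sqrt_nonneg _

lemma vecEnorm_sq {n : ℕ} (v : Fin n → ℝ) : vecEnorm v ^ 2 = ∑ i, v i ^ 2 :=
  Real.sq_sqrt (Finset.sum_nonneg fun _ _ => sq_nonneg _)

lemma vecEnorm_eq_norm {n : ℕ} (v : Fin n → ℝ) :
    vecEnorm v = ‖(WithLp.equiv 2 (Fin n → ℝ)).symm v‖ := by
  rw [EuclideanSpace.norm_eq]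
  simp [vecEnorm, sq_abs]

lemma vecEnorm_add_le {n : ℕ} (u v : Fin n → ℝ) : vecEnorm (u + v) ≤ vecEnorm u + vecEnorm v := by
  rw [vecEnorm_eq_norm, vecEnorm_eq_norm, vecEnorm_eq_norm]
  exact norm_add_le _ _

lemma vecEnorm_mulVec_le {n m : ℕ} (A : Matrix (Fin n) (Fin m) ℝ) (x : Fin m → ℝ) :
    vecEnorm (A.mulVec x) ≤ Real.sqrt (Matrix.trace (Aᵀ * A)) * vecEnorm x := by
  rw [trace_transpose_mul_self, vecEnorm, vecEnorm,
    ← Real.sqrt_mul (Finset.sum_nonneg fun _ _ => Finset.sum_nonneg fun _ _ => sq_nonneg _ : (0:ℝ) ≤ ∑ i, ∑ j, A i j ^ 2)]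
  apply Real.sqrt_le_sqrt
  rw [Finset.sum_mul]
  refine Finset.sum_le_sum fun i _ => ?_
  calc (A.mulVec x i) ^ 2 = (∑ j, A i j * x j) ^ 2 := by rw [Matrix.mulVec, dotProduct]
    _ ≤ (∑ j, A i j ^ 2) * ∑ j, x j ^ 2 := Finset.sum_mul_sq_le_sq_mul_sq _ _ _

lemma dot_self_eq {n : ℕ} (v : Fin n → ℝ) : v ⬝ᵥ v = ∑ i, v i ^ 2 := by
  simp [dotProduct, sq]

lemma vecEnorm_eq_sqrt_dot {n : ℕ} (v : Fin n → ℝ) : vecEnorm v = Real.sqrt (v ⬝ᵥ v) := by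
  rw [dot_self_eq]; rfl

lemma proj_sub_dot {n d : ℕ} (U : Matrix (Fin n) (Fin d) ℝ) (hU : Uᵀ * U = 1)
    (x : Fin n → ℝ) :
    ((1 - U * Uᵀ) *ᵥ x) ⬝ᵥ ((1 - U * Uᵀ) *ᵥ x) = x ⬝ᵥ x - (Uᵀ *ᵥ x) ⬝ᵥ (Uᵀ *ᵥ x) := by
  have h1 : (1 - U * Uᵀ) *ᵥ x = x - U *ᵥ (Uᵀ *ᵥ x) := by
    rw [Matrix.sub_mulVec, Matrix.one_mulVec, Matrix.mulVec_mulVec]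
  set y := Uᵀ *ᵥ x with hy
  have h2 : x ⬝ᵥ (U *ᵥ y) = y ⬝ᵥ y := by
    rw [Matrix.dotProduct_mulVec, ← Matrix.mulVec_transpose]
  have h3 : (U *ᵥ y) ⬝ᵥ x = y ⬝ᵥ y := by rw [dotProduct_comm]; exact h2
  have h4 : (U *ᵥ y) ⬝ᵥ (U *ᵥ y) = y ⬝ᵥ y := by
    rw [Matrix.dotProduct_mulVec, ← Matrix.mulVec_transpose, Matrix.mulVec_mulVec, hU,
      Matrix.one_mulVec]
  rw [h1, sub_dotProduct, dotProduct_sub, dotProduct_sub, h2, h3, h4]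
  ring

lemma contraction {n d : ℕ} (U : Matrix (Fin n) (Fin d) ℝ) (hU : Uᵀ * U = 1)
    (x : Fin n → ℝ) : vecEnorm ((1 - U * Uᵀ) *ᵥ x) ≤ vecEnorm x := by
  rw [vecEnorm_eq_sqrt_dot, vecEnorm_eq_sqrt_dot]
  apply Real.sqrt_le_sqrt
  rw [proj_sub_dot U hU]
  have : 0 ≤ (Uᵀ *ᵥ x) ⬝ᵥ (Uᵀ *ᵥ x) := by rw [dot_self_eq]; positivity
  linarith

lemma proj_sym {n d : ℕ} (U : Matrix (Fin n) (Fin d) ℝ) : (U * Uᵀ)ᵀ = U * Uᵀ := by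
  rw [Matrix.transpose_mul, Matrix.transpose_transpose]

lemma proj_idem {n d : ℕ} (U : Matrix (Fin n) (Fin d) ℝ) (hU : Uᵀ * U = 1) :
    (U * Uᵀ) * (U * Uᵀ) = U * Uᵀ := by
  rw [Matrix.mul_assoc, ← Matrix.mul_assoc Uᵀ U, hU, Matrix.one_mul]

lemma trace_proj {n d : ℕ} (U : Matrix (Fin n) (Fin d) ℝ) (hU : Uᵀ * U = 1) :
    Matrix.trace (U * Uᵀ) = d := by
  rw [Matrix.trace_mul_comm, hU, Matrix.trace_one]
  simp

lemma trace_key {n : ℕ} (P Q : Matrix (Fin n) (Fin n) ℝ) (hP : Pᵀ = P) (hQ : Qᵀ = Q)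
    (hPi : P * P = P) (hQi : Q * Q = Q) (htr : P.trace = Q.trace) :
    Matrix.trace (((1 - Q) * P)ᵀ * ((1 - Q) * P)) = Matrix.trace ((1 - P) * Q) := by
  have hQs : (1 - Q)ᵀ = 1 - Q := by rw [Matrix.transpose_sub, Matrix.transpose_one, hQ]
  have hQi' : (1 - Q) * (1 - Q) = 1 - Q := by
    simp only [Matrix.mul_sub, Matrix.sub_mul, Matrix.one_mul, Matrix.mul_one, hQi]
    abel
  have h1 : ((1 - Q) * P)ᵀ * ((1 - Q) * P) = P * (1 - Q) * P := by
    rw [Matrix.transpose_mul, hP, hQs, Matrix.mul_assoc P, ← Matrix.mul_assoc (1 - Q), hQi',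
      Matrix.mul_assoc, ← Matrix.mul_assoc]
  rw [h1, Matrix.trace_mul_cycle, hPi, Matrix.mul_sub, Matrix.sub_mul,
    Matrix.mul_one, Matrix.one_mul, Matrix.trace_sub, Matrix.trace_sub, htr]

lemma step_trace {n d : ℕ} (U V : Matrix (Fin n) (Fin d) ℝ) (hUo : Uᵀ * U = 1)
    (hVo : Vᵀ * V = 1) :
    Matrix.trace (((1 - V * Vᵀ) * (U * Uᵀ))ᵀ * ((1 - V * Vᵀ) * (U * Uᵀ))) =
      Matrix.trace ((1 - U * Uᵀ) * (V * Vᵀ)) :=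
  trace_key _ _ (proj_sym U) (proj_sym V) (proj_idem U hUo) (proj_idem V hVo)
    (by rw [trace_proj U hUo, trace_proj V hVo])

lemma step_bound {n d : ℕ} (U V : Matrix (Fin n) (Fin d) ℝ) (hUo : Uᵀ * U = 1)
    (hVo : Vᵀ * V = 1) (c : ℝ)
    (h : Real.sqrt (Matrix.trace ((1 - U * Uᵀ) * (V * Vᵀ))) ≤ c) (x : Fin n → ℝ) :
    vecEnorm ((1 - V * Vᵀ) *ᵥ x) ≤ c * vecEnorm x + vecEnorm ((1 - U * Uᵀ) *ᵥ x) := by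
  set P := U * Uᵀ
  set Q := V * Vᵀ
  have hsplit : (1 - Q) *ᵥ x = ((1 - Q) * P) *ᵥ x + (1 - Q) *ᵥ ((1 - P) *ᵥ x) := by
    rw [Matrix.mulVec_mulVec, ← Matrix.add_mulVec, ← Matrix.mul_add]
    simp
  calc vecEnorm ((1 - Q) *ᵥ x) ≤ vecEnorm (((1 - Q) * P) *ᵥ x) + vecEnorm ((1 - Q) *ᵥ ((1 - P) *ᵥ x)) := by
        rw [hsplit]; exact vecEnorm_add_le _ _
    _ ≤ c * vecEnorm x + vecEnorm ((1 - P) *ᵥ x) := by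
        gcongr
        · calc vecEnorm (((1 - Q) * P) *ᵥ x)
              ≤ Real.sqrt (Matrix.trace (((1 - Q) * P)ᵀ * ((1 - Q) * P))) * vecEnorm x :=
                vecEnorm_mulVec_le _ _
            _ ≤ c * vecEnorm x := by
                rw [step_trace U V hUo hVo]
                exact mul_le_mul_of_nonneg_right h (vecEnorm_nonneg' x)
        · exact contraction V hVo _

lemma eq_of_sq_eq {a b : ℝ} (ha : 0 ≤ a) (hb : 0 ≤ b) (h : a ^ 2 = b ^ 2) : a = b := by
  rw [← Real.sqrt_sq ha, h, Real.sqrt_sq hb]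

lemma chain {n d T : ℕ} (U : Fin T → Matrix (Fin n) (Fin d) ℝ)
    (hU : ∀ j, (U j)ᵀ * U j = 1) (c : ℝ)
    (hUc : ∀ (j : Fin T) (hj : (j : ℕ) + 1 < T),
      Real.sqrt (Matrix.trace
        ((1 - U j * (U j)ᵀ) * (U ⟨(j : ℕ) + 1, hj⟩ * (U ⟨(j : ℕ) + 1, hj⟩)ᵀ))) ≤ c)
    (hL : T - 1 < T) :
    ∀ (m : ℕ) (j : Fin T), (j : ℕ) + m = T - 1 → ∀ x : Fin n → ℝ,
      vecEnorm ((1 - U ⟨T - 1, hL⟩ * (U ⟨T - 1, hL⟩)ᵀ) *ᵥ x)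
        ≤ c * m * vecEnorm x + vecEnorm ((1 - U j * (U j)ᵀ) *ᵥ x) := by
  intro m
  induction m with
  | zero =>
    intro j hj x
    have hje : j = ⟨T - 1, hL⟩ := by
      apply Fin.ext
      show (j : ℕ) = T - 1
      omega
    subst hje
    simp
  | succ m ih =>
    intro j hj x
    have hj1 : (j : ℕ) + 1 < T := by omega
    have h1 := ih ⟨(j : ℕ) + 1, hj1⟩ (by show (j : ℕ) + 1 + m = T - 1; omega) x
    have h2 := step_bound (U j) (U ⟨(j : ℕ) + 1, hj1⟩) (hU j) (hU _) c (hUc j hj1) x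
    have hcast : ((m + 1 : ℕ) : ℝ) = (m : ℝ) + 1 := by push_cast; ring
    calc vecEnorm ((1 - U ⟨T - 1, hL⟩ * (U ⟨T - 1, hL⟩)ᵀ) *ᵥ x)
        ≤ c * m * vecEnorm x
            + vecEnorm ((1 - U ⟨(j : ℕ) + 1, hj1⟩ * (U ⟨(j : ℕ) + 1, hj1⟩)ᵀ) *ᵥ x) := h1
      _ ≤ c * m * vecEnorm x + (c * vecEnorm x + vecEnorm ((1 - U j * (U j)ᵀ) *ᵥ x)) := by linarith
      _ = c * (m + 1 : ℕ) * vecEnorm x + vecEnorm ((1 - U j * (U j)ᵀ) *ᵥ x) := by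
          rw [hcast]; ring

/-- Noise bound, Lemma 2: Let `𝐔₁, …, 𝐔_T` be subspaces of `ℝⁿ`, all of
dimension `d` (represented by orthonormal matrices `U j ∈ ℝ^{n×d}`, so
`P_{𝐔_j} = (U j)(U j)ᵀ`), such that `d₂(𝐔_j, 𝐔_{j+1}) ≤ c` for `j = 1, …, T−1` and some
`c ≥ 0`. Let `w_j = w̄_j + e_j` for `j = 1, …, T`, where `w̄_j ∈ 𝐔_j` and `‖e_j‖₂ ≤ ε`
for some `ε ≥ 0`. Let `W ∈ ℝ^{n×T}` be the matrix with columns `w₁, …, w_T` and let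
`D = diag(T−1, T−2, …, 1, 0) ∈ ℝ^{T×T}`. Then
`‖P_{𝐔_T}^⊥ W‖_F ≤ c · ‖W D‖_F + ε √T (c(T−1) + 1)`. -/
theorem stmt5 {n d T : ℕ} (hT : 0 < T)
    (U : Fin T → Matrix (Fin n) (Fin d) ℝ)
    (hU : ∀ j, (U j)ᵀ * U j = 1)
    (c : ℝ) (hc : 0 ≤ c)
    (hUc : ∀ (j : Fin T) (hj : (j : ℕ) + 1 < T),
      Real.sqrt (Matrix.trace
        ((1 - U j * (U j)ᵀ) * (U ⟨(j : ℕ) + 1, hj⟩ * (U ⟨(j : ℕ) + 1, hj⟩)ᵀ))) ≤ c)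
    (ε : ℝ) (hε : 0 ≤ ε)
    (wbar e w : Fin T → Fin n → ℝ)
    (hwbar : ∀ j, ∃ z : Fin d → ℝ, wbar j = (U j).mulVec z)
    (he : ∀ j, vecEnorm (e j) ≤ ε)
    (hw : ∀ j, w j = wbar j + e j)
    (W : Matrix (Fin n) (Fin T) ℝ) (hW : W = Matrix.of fun i j => w j i)
    (D : Matrix (Fin T) (Fin T) ℝ)
    (hD : D = Matrix.diagonal fun j : Fin T => (T : ℝ) - 1 - (j : ℕ)) :
    frob ((1 - U ⟨T - 1, by omega⟩ * (U ⟨T - 1, by omega⟩)ᵀ) * W)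
      ≤ c * frob (W * D) + ε * Real.sqrt T * (c * ((T : ℝ) - 1) + 1) := by
  have hL : T - 1 < T := by omega
  have hT1 : (1 : ℝ) ≤ (T : ℝ) := by exact_mod_cast hT
  set b : ℝ := ε * (c * ((T : ℝ) - 1) + 1) with hb
  have hcT : 0 ≤ c * ((T : ℝ) - 1) := mul_nonneg hc (by linarith)
  have hb0 : 0 ≤ b := mul_nonneg hε (by linarith)
  have percol : ∀ j : Fin T,
      vecEnorm ((1 - U ⟨T - 1, hL⟩ * (U ⟨T - 1, hL⟩)ᵀ) *ᵥ w j)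
        ≤ c * ((T : ℝ) - 1 - (j : ℕ)) * vecEnorm (w j) + b := by
    intro j
    have hjm : (j : ℕ) + (T - 1 - (j : ℕ)) = T - 1 := by have := j.isLt; omega
    have h1 := chain U hU c hUc hL (T - 1 - (j : ℕ)) j hjm (w j)
    obtain ⟨z, hz⟩ := hwbar j
    have hzero : (1 - U j * (U j)ᵀ) *ᵥ wbar j = 0 := by
      rw [hz, Matrix.sub_mulVec, Matrix.one_mulVec, Matrix.mulVec_mulVec,
        Matrix.mul_assoc, hU j, Matrix.mul_one, sub_self]
    have h3 : vecEnorm ((1 - U j * (U j)ᵀ) *ᵥ w j) ≤ ε := by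
      have h2 : (1 - U j * (U j)ᵀ) *ᵥ w j = (1 - U j * (U j)ᵀ) *ᵥ e j := by
        rw [hw j, Matrix.mulVec_add, hzero, zero_add]
      rw [h2]
      exact le_trans (contraction (U j) (hU j) _) (he j)
    have hcast : ((T - 1 - (j : ℕ) : ℕ) : ℝ) = (T : ℝ) - 1 - (j : ℕ) := by
      have h5 : (T - 1 - (j : ℕ) : ℕ) = T - (1 + (j : ℕ)) := by omega
      have h6 : 1 + (j : ℕ) ≤ T := by have := j.isLt; omega
      rw [h5, Nat.cast_sub h6]
      push_cast
      ring
    rw [hcast] at h1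
    have h4 : ε ≤ b := by nlinarith
    linarith
  show frob ((1 - U ⟨T - 1, hL⟩ * (U ⟨T - 1, hL⟩)ᵀ) * W)
      ≤ c * frob (W * D) + ε * Real.sqrt T * (c * ((T : ℝ) - 1) + 1)
  have hcol : ∀ (i : Fin n) (j : Fin T),
      ((1 - U ⟨T - 1, hL⟩ * (U ⟨T - 1, hL⟩)ᵀ) * W : Matrix (Fin n) (Fin T) ℝ) i j
        = ((1 - U ⟨T - 1, hL⟩ * (U ⟨T - 1, hL⟩)ᵀ) *ᵥ w j) i := by
    intro i j
    rw [hW]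
    simp [Matrix.mul_apply, Matrix.mulVec, dotProduct]
  have hfrob1 : frob ((1 - U ⟨T - 1, hL⟩ * (U ⟨T - 1, hL⟩)ᵀ) * W)
      = Real.sqrt (∑ j, vecEnorm ((1 - U ⟨T - 1, hL⟩ * (U ⟨T - 1, hL⟩)ᵀ) *ᵥ w j) ^ 2) := by
    rw [show frob ((1 - U ⟨T - 1, hL⟩ * (U ⟨T - 1, hL⟩)ᵀ) * W) = Real.sqrt (Matrix.trace (((1 - U ⟨T - 1, hL⟩ * (U ⟨T - 1, hL⟩)ᵀ) * W)ᵀ * ((1 - U ⟨T - 1, hL⟩ * (U ⟨T - 1, hL⟩)ᵀ) * W))) from rfl, trace_transpose_mul_self, Finset.sum_comm]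
    congr 1
    refine Finset.sum_congr rfl fun j _ => ?_
    rw [vecEnorm_sq]
    exact Finset.sum_congr rfl fun i _ => by rw [hcol i j]
  set g : Fin T → ℝ := fun j : Fin T => c * ((T : ℝ) - 1 - (j : ℕ)) * vecEnorm (w j) with hgdef
  have hmono : Real.sqrt (∑ j, vecEnorm ((1 - U ⟨T - 1, hL⟩ * (U ⟨T - 1, hL⟩)ᵀ) *ᵥ w j) ^ 2)
      ≤ vecEnorm (g + fun _ => b) := by
    rw [vecEnorm]
    apply Real.sqrt_le_sqrt
    refine Finset.sum_le_sum fun j _ => ?_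
    have h := percol j
    calc vecEnorm ((1 - U ⟨T - 1, hL⟩ * (U ⟨T - 1, hL⟩)ᵀ) *ᵥ w j) ^ 2
        ≤ (c * ((T : ℝ) - 1 - (j : ℕ)) * vecEnorm (w j) + b) ^ 2 :=
          pow_le_pow_left₀ (vecEnorm_nonneg' _) h 2
      _ = ((g + fun _ => b : Fin T → ℝ) j) ^ 2 := rfl
  have hg : vecEnorm g = c * frob (W * D) := by
    apply eq_of_sq_eq (vecEnorm_nonneg' _) (mul_nonneg hc (Real.sqrt_nonneg _))
    have htr : Matrix.trace ((W * D)ᵀ * (W * D)) = ∑ i, ∑ j, ((W * D) i j) ^ 2 :=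
      trace_transpose_mul_self _
    have htrnn : 0 ≤ Matrix.trace ((W * D)ᵀ * (W * D)) := by
      rw [htr]
      positivity
    rw [vecEnorm_sq, mul_pow, Real.sq_sqrt htrnn, htr, Finset.sum_comm, Finset.mul_sum]
    refine Finset.sum_congr rfl fun j _ => ?_
    have hWD : ∀ i, (W * D) i j = w j i * ((T : ℝ) - 1 - (j : ℕ)) := by
      intro i
      rw [hD, Matrix.mul_diagonal, hW]
      rfl
    calc g j ^ 2 = c ^ 2 * (((T : ℝ) - 1 - (j : ℕ)) ^ 2 * ∑ i, (w j i) ^ 2) := by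
          rw [show g j = c * ((T : ℝ) - 1 - (j : ℕ)) * vecEnorm (w j) from rfl,
            ← vecEnorm_sq (w j)]
          ring
      _ = c ^ 2 * ∑ i, ((W * D) i j) ^ 2 := by
          rw [Finset.mul_sum]
          congr 1
          refine Finset.sum_congr rfl fun i _ => ?_
          rw [hWD i]
          ring
  have hconst : vecEnorm (fun _ : Fin T => b) = Real.sqrt T * b := by
    rw [vecEnorm]
    rw [Finset.sum_const, Finset.card_univ, Fintype.card_fin, nsmul_eq_mul]
    rw [Real.sqrt_mul (by positivity), Real.sqrt_sq hb0]
  calc frob ((1 - U ⟨T - 1, hL⟩ * (U ⟨T - 1, hL⟩)ᵀ) * W)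
      ≤ vecEnorm (g + fun _ => b) := by rw [hfrob1]; exact hmono
    _ ≤ vecEnorm g + vecEnorm (fun _ => b) := vecEnorm_add_le _ _
    _ = c * frob (W * D) + Real.sqrt T * b := by rw [hg, hconst]
    _ = c * frob (W * D) + ε * Real.sqrt T * (c * ((T : ℝ) - 1) + 1) := by rw [hb]; ring
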